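/- Upper bound on the generalized Vandermonde objective: let μ_1,...,μ_K be distinct reals with the property that Σ_{k=1}^{K} L_k(x)² ≤ 1 for all x ∈ [−1,1], where L_k are the Lagrange basis polynomials at μ. Then for any δ_1,...,δ_L ∈ [−1,1], Σ over K-subsets C of {1,...,L} of ∏_{i<j∈C}(δ_j − δ_i)² ≤ [∏_{i<j}(μ_j − μ_i)]² · (L/K)^K. -/

import Mathlib

open Finset Matrix Equiv

lemma trace_eq_sum_eigs {K : ℕ} {G : Matrix (Fin K) (Fin K) ℝ} (hH : G.IsHermitian) :
    G.trace = ∑ i, hH.eigenvalues i := by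
  conv_lhs => rw [hH.spectral_theorem]
  rw [Unitary.conjStarAlgAut_apply, trace_mul_cycle]
  have : (star (hH.eigenvectorUnitary : Matrix (Fin K) (Fin K) ℝ)) *
      (hH.eigenvectorUnitary : Matrix (Fin K) (Fin K) ℝ) = 1 :=
    (Matrix.mem_unitaryGroup_iff').mp hH.eigenvectorUnitary.2
  rw [this, one_mul, trace_diagonal]
  rfl

lemma det_le_pow_trace {K : ℕ} (hK : 0 < K) {G : Matrix (Fin K) (Fin K) ℝ}
    (hG : G.PosSemidef) : G.det ≤ (G.trace / K) ^ K := by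
  have hH := hG.1
  have hz : ∀ i, 0 ≤ hH.eigenvalues i := hG.eigenvalues_nonneg
  have hdet : G.det = ∏ i, hH.eigenvalues i := hH.det_eq_prod_eigenvalues
  have htr : G.trace = ∑ i, hH.eigenvalues i := trace_eq_sum_eigs hH
  rw [hdet, htr]
  set z := hH.eigenvalues
  have hKR : (0:ℝ) < K := by exact_mod_cast hK
  have h1 : (∏ i, z i ^ ((1:ℝ))) ^ ((∑ _i : Fin K, (1:ℝ)))⁻¹ ≤
      (∑ i, (1:ℝ) * z i) / (∑ _i : Fin K, (1:ℝ)) :=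
    Real.geom_mean_le_arith_mean univ (fun _ => 1) z (fun _ _ => zero_le_one)
      (by simp [hKR]) (fun i _ => hz i)
  simp only [Real.rpow_one, one_mul, sum_const, card_univ, Fintype.card_fin, nsmul_eq_mul,
    mul_one] at h1
  have h0 : (0:ℝ) ≤ (∏ i, z i) ^ ((K:ℝ))⁻¹ :=
    Real.rpow_nonneg (prod_nonneg fun i _ => hz i) _
  have h2 := pow_le_pow_left₀ h0 h1 K
  calc ∏ i, z i = ((∏ i, z i) ^ ((K:ℝ))⁻¹) ^ K := by
        rw [← Real.rpow_natCast ((∏ i, z i) ^ ((K:ℝ))⁻¹) K,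
          ← Real.rpow_mul (prod_nonneg fun i _ => hz i),
          inv_mul_cancel₀ (by positivity), Real.rpow_one]
    _ ≤ _ := h2

variable {K L : ℕ}

lemma image_embOfFin_comp_perm (S : Finset (Fin L)) (h : S.card = K) (π : Equiv.Perm (Fin K)) :
    Finset.image (⇑(S.orderEmbOfFin h) ∘ ⇑π) univ = S := by
  ext a
  simp only [mem_image, mem_univ, true_and, Function.comp_apply]
  constructor
  · rintro ⟨i, rfl⟩; exact S.orderEmbOfFin_mem h _
  · intro ha
    have h2 : a ∈ Set.range (S.orderEmbOfFin h) := by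
      rw [S.range_orderEmbOfFin h]; exact ha
    obtain ⟨i, hi⟩ := h2
    exact ⟨π.symm i, by simp [hi]⟩

lemma cauchy_binet (hKL : K ≤ L) (A : Matrix (Fin K) (Fin L) ℝ) (B : Matrix (Fin L) (Fin K) ℝ) :
    det (A * B) = ∑ S ∈ (univ : Finset (Fin L)).powersetCard K,
      (if h : S.card = K then
        det (A.submatrix id (S.orderEmbOfFin h)) * det (B.submatrix (S.orderEmbOfFin h) id)
      else 0) := by
  classical
  set Φ : (Fin K → Fin L) → ℝ :=
    fun g => (∏ i, B (g i) i) * det (A.submatrix id g) with hΦ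
  have step1 : det (A * B) = ∑ g : Fin K → Fin L, Φ g := by
    calc det (A * B)
        = ∑ g : Fin K → Fin L, ∑ σ : Perm (Fin K),
            ((Perm.sign σ : ℤ) : ℝ) * ∏ i, A (σ i) (g i) * B (g i) i := by
          simp only [det_apply', mul_apply, prod_univ_sum, mul_sum, Fintype.piFinset_univ]
          rw [Finset.sum_comm]
      _ = ∑ g : Fin K → Fin L, Φ g := by
          refine Finset.sum_congr rfl fun g _ => ?_
          rw [hΦ]
          simp only [det_apply', submatrix_apply, id_eq, Finset.mul_sum]
          refine Finset.sum_congr rfl fun σ _ => ?_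
          rw [prod_mul_distrib]
          ring
  have step2 : ∑ g : Fin K → Fin L, Φ g
      = ∑ g ∈ (univ : Finset (Fin K → Fin L)).filter (fun g => Function.Injective g), Φ g := by
    refine (Finset.sum_subset (filter_subset _ _) fun g _ hg => ?_).symm
    have hg' : ¬ Function.Injective g := by simpa using hg
    obtain ⟨i, j, hij, hne⟩ : ∃ i j, g i = g j ∧ i ≠ j := by
      rw [Function.Injective] at hg'; push_neg at hg'
      obtain ⟨i, j, h1, h2⟩ := hg'; exact ⟨i, j, h1, h2⟩
    have : det (A.submatrix id g) = 0 :=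
      det_zero_of_column_eq hne fun k => by simp [hij]
    simp [hΦ, this]
  set t := ((univ : Finset (Fin L)).powersetCard K).sigma
      (fun _ => (univ : Finset (Equiv.Perm (Fin K)))) with ht
  set G : (Σ _ : Finset (Fin L), Equiv.Perm (Fin K)) → ℝ :=
    fun x => if h : x.1.card = K then Φ ((x.1.orderEmbOfFin h) ∘ x.2) else 0 with hG
  have step3 : ∑ x ∈ t, G x
      = ∑ g ∈ (univ : Finset (Fin K → Fin L)).filter (fun g => Function.Injective g), Φ g := by
    refine Finset.sum_bij (fun x hx => (x.1.orderEmbOfFin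
        (Finset.mem_powersetCard_univ.mp (Finset.mem_sigma.mp hx).1)) ∘ x.2)
      ?_ ?_ ?_ ?_
    · intro x hx
      simp only [mem_filter, mem_univ, true_and]
      exact Function.Injective.comp (RelEmbedding.injective _) (Equiv.injective _)
    · rintro ⟨S, π⟩ h1 ⟨T, ρ⟩ h2 heq
      have hS := Finset.mem_powersetCard_univ.mp (Finset.mem_sigma.mp h1).1
      have hT := Finset.mem_powersetCard_univ.mp (Finset.mem_sigma.mp h2).1
      dsimp only at heq hS hT
      have hST : S = T := by
        rw [← image_embOfFin_comp_perm S hS π, ← image_embOfFin_comp_perm T hT ρ, heq]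
      subst hST
      have hπρ : π = ρ := by
        ext i
        have := congrFun heq i
        simp only [Function.comp_apply] at this
        exact Fin.val_eq_of_eq ((S.orderEmbOfFin hS).injective this)
      rw [hπρ]
    · intro g hg
      have hginj : Function.Injective g := (Finset.mem_filter.mp hg).2
      set S := Finset.image g univ with hS
      have hScard : S.card = K := by
        rw [hS, Finset.card_image_of_injective _ hginj, card_univ, Fintype.card_fin]
      have hmem : ∀ i, g i ∈ S := fun i => Finset.mem_image_of_mem g (mem_univ i)
      set φ : Fin K → Fin K := fun i => (S.orderIsoOfFin hScard).symm ⟨g i, hmem i⟩ with hφ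
      have hφinj : Function.Injective φ := by
        intro i j hij
        apply hginj
        have h2 : (⟨g i, hmem i⟩ : {x // x ∈ S}) = ⟨g j, hmem j⟩ :=
          (S.orderIsoOfFin hScard).symm.injective hij
        exact congrArg Subtype.val h2
      set π : Equiv.Perm (Fin K) :=
        Equiv.ofBijective φ (Finite.injective_iff_bijective.mp hφinj) with hπ
      refine ⟨⟨S, π⟩, Finset.mem_sigma.mpr ⟨Finset.mem_powersetCard_univ.mpr hScard, mem_univ _⟩, ?_⟩
      funext i
      show S.orderEmbOfFin hScard (φ i) = g i
      rw [hφ]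
      have := S.coe_orderIsoOfFin_apply hScard ((S.orderIsoOfFin hScard).symm ⟨g i, hmem i⟩)
      rw [← this]
      simp
    · rintro ⟨S, π⟩ hx
      have hS := Finset.mem_powersetCard_univ.mp (Finset.mem_sigma.mp hx).1
      simp only [hG, dif_pos hS]
  have step4 : ∑ x ∈ t, G x = ∑ S ∈ (univ : Finset (Fin L)).powersetCard K,
      (if h : S.card = K then
        det (A.submatrix id (S.orderEmbOfFin h)) * det (B.submatrix (S.orderEmbOfFin h) id)
      else 0) := by
    rw [ht, Finset.sum_sigma]
    refine Finset.sum_congr rfl fun S hSmem => ?_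
    have hS := Finset.mem_powersetCard_univ.mp hSmem
    rw [dif_pos hS]
    set e := S.orderEmbOfFin hS with he
    calc ∑ π : Equiv.Perm (Fin K), G ⟨S, π⟩
        = ∑ π : Equiv.Perm (Fin K), (∏ i, B (e (π i)) i) *
            (((Perm.sign π : ℤ) : ℝ) * det (A.submatrix id e)) := by
          refine Finset.sum_congr rfl fun π _ => ?_
          simp only [hG, dif_pos hS, hΦ]
          congr 1
          have : (A.submatrix id (⇑e ∘ ⇑π)) = (A.submatrix id e).submatrix id π := by
            rw [submatrix_submatrix]; rfl
          rw [this, det_permute']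
      _ = det (A.submatrix id e) * det (B.submatrix e id) := by
          rw [det_apply' (B.submatrix e id), Finset.mul_sum]
          refine Finset.sum_congr rfl fun π _ => ?_
          simp only [submatrix_apply, id_eq]
          ring
  rw [step1, step2, ← step3, step4]

variable {K L : ℕ}

lemma pair_prod (C : Finset (Fin L)) (h : C.card = K) (f : Fin L → Fin L → ℝ) :
    ∏ p ∈ C.offDiag.filter (fun p : Fin L × Fin L => p.1 < p.2), f p.1 p.2
      = ∏ i : Fin K, ∏ j ∈ Finset.Ioi i,
          f (C.orderEmbOfFin h i) (C.orderEmbOfFin h j) := by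
  rw [Finset.prod_sigma']
  set e := C.orderEmbOfFin h with he
  refine (Finset.prod_nbij (fun x : (Σ _ : Fin K, Fin K) => (e x.1, e x.2)) ?_ ?_ ?_ ?_).symm
  · rintro ⟨i, j⟩ hx
    have hij : i < j := by simpa using (Finset.mem_sigma.mp hx).2
    simp only [Finset.mem_filter, Finset.mem_offDiag]
    refine ⟨⟨C.orderEmbOfFin_mem h i, C.orderEmbOfFin_mem h j, ?_⟩, ?_⟩
    · exact ne_of_lt (e.strictMono hij)
    · exact e.strictMono hij
  · rintro ⟨i, j⟩ - ⟨i', j'⟩ - hx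
    simp only [Prod.mk.injEq] at hx
    obtain ⟨h1, h2⟩ := hx
    have : i = i' := e.injective h1
    have : j = j' := e.injective h2
    subst_vars; rfl
  · rintro ⟨a, b⟩ hp
    simp only [Finset.coe_filter, Set.mem_setOf_eq, Finset.mem_offDiag] at hp
    obtain ⟨⟨ha, hb, -⟩, hab⟩ := hp
    have ha' : a ∈ Set.range e := by rw [he, C.range_orderEmbOfFin h]; exact ha
    have hb' : b ∈ Set.range e := by rw [he, C.range_orderEmbOfFin h]; exact hb
    obtain ⟨i, rfl⟩ := ha'
    obtain ⟨j, rfl⟩ := hb'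
    have hij : i < j := e.strictMono.lt_iff_lt.mp hab
    refine ⟨⟨i, j⟩, ?_, rfl⟩
    simp [hij]
  · rintro ⟨i, j⟩ -
    rfl

lemma lagrange_identity (hK : 0 < K) (μ : Fin K → ℝ) (hμ : Function.Injective μ)
    (x : ℝ) (j : Fin K) :
    x ^ (j : ℕ) = ∑ k : Fin K,
      (∏ i ∈ Finset.univ.erase k, (x - μ i) / (μ k - μ i)) * μ k ^ (j : ℕ) := by
  classical
  have hinj : Set.InjOn μ (univ : Finset (Fin K)) := fun a _ b _ hab => hμ hab
  have hdeg : (Polynomial.X ^ (j : ℕ) : Polynomial ℝ).degree < (univ : Finset (Fin K)).card := by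
    rw [Polynomial.degree_X_pow, card_univ, Fintype.card_fin]
    exact_mod_cast j.2
  have hinterp := Lagrange.eq_interpolate hinj hdeg
  have := congrArg (Polynomial.eval x) hinterp
  simp only [Polynomial.eval_pow, Polynomial.eval_X, Lagrange.interpolate_apply,
    Polynomial.eval_finset_sum, Polynomial.eval_mul, Polynomial.eval_C] at this
  rw [this]
  refine Finset.sum_congr rfl fun k _ => ?_
  rw [mul_comm]
  congr 1
  show Polynomial.eval x (Lagrange.basis univ μ k) = _
  rw [Lagrange.basis, Polynomial.eval_prod]
  refine Finset.prod_congr rfl fun i hi => ?_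
  rw [Lagrange.basisDivisor]
  simp only [Polynomial.eval_mul, Polynomial.eval_C, Polynomial.eval_sub, Polynomial.eval_X]
  rw [div_eq_inv_mul]

theorem stmt_10 (L K : ℕ) (hK : 0 < K) (hKL : K ≤ L)
    (μ : Fin K → ℝ) (hμ : Function.Injective μ)
    (hmaj : ∀ x ∈ Set.Icc (-1 : ℝ) 1,
      (∑ k : Fin K, (∏ i ∈ Finset.univ.erase k, (x - μ i) / (μ k - μ i)) ^ 2) ≤ 1)
    (δ : Fin L → ℝ) (hδ : ∀ l, δ l ∈ Set.Icc (-1 : ℝ) 1) :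
    (∑ C ∈ Finset.univ.powersetCard K,
        ∏ p ∈ C.offDiag.filter (fun p : Fin L × Fin L => p.1 < p.2),
          (δ p.2 - δ p.1) ^ 2) ≤
      (∏ i : Fin K, ∏ j ∈ Finset.Ioi i, (μ j - μ i)) ^ 2 * ((L : ℝ) / K) ^ K := by
  classical
  set D : Matrix (Fin L) (Fin K) ℝ := Matrix.of fun l (k : Fin K) => δ l ^ (k : ℕ) with hD
  set Ψ : Matrix (Fin L) (Fin K) ℝ :=
    Matrix.of fun l k => ∏ i ∈ Finset.univ.erase k, (δ l - μ i) / (μ k - μ i) with hΨ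
  set Z : Matrix (Fin K) (Fin K) ℝ := Matrix.vandermonde μ with hZ
  have hfact : D = Ψ * Z := by
    ext l j
    simp only [hD, hΨ, hZ, Matrix.mul_apply, Matrix.of_apply, Matrix.vandermonde_apply]
    exact lagrange_identity hK μ hμ (δ l) j
  have hLHS : (∑ C ∈ Finset.univ.powersetCard K,
        ∏ p ∈ C.offDiag.filter (fun p : Fin L × Fin L => p.1 < p.2),
          (δ p.2 - δ p.1) ^ 2) = det (Dᵀ * D) := by
    rw [cauchy_binet hKL]
    refine Finset.sum_congr rfl fun C hC => ?_
    have h : C.card = K := Finset.mem_powersetCard_univ.mp hC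
    rw [dif_pos h]
    have h1 : Dᵀ.submatrix id (C.orderEmbOfFin h) = (D.submatrix (C.orderEmbOfFin h) id)ᵀ := by
      rw [transpose_submatrix]
    have h2 : D.submatrix (C.orderEmbOfFin h) id = Matrix.vandermonde (δ ∘ (C.orderEmbOfFin h)) := by
      ext i j; rfl
    rw [h1, det_transpose, ← sq, h2, Matrix.det_vandermonde,
      pair_prod C h (fun a b => (δ b - δ a) ^ 2)]
    simp only [← Finset.prod_pow, Function.comp_apply]
  have hG : det (Dᵀ * D) = (det Z) ^ 2 * det (Ψᵀ * Ψ) := by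
    rw [hfact, transpose_mul]
    rw [show Zᵀ * Ψᵀ * (Ψ * Z) = Zᵀ * (Ψᵀ * Ψ) * Z by simp only [Matrix.mul_assoc]]
    rw [det_mul, det_mul, det_transpose]
    ring
  have hPSD : (Ψᵀ * Ψ).PosSemidef := posSemidef_conjTranspose_mul_self Ψ
  have htr0 : (0:ℝ) ≤ (Ψᵀ * Ψ).trace := by
    rw [Matrix.trace]
    refine Finset.sum_nonneg fun k _ => ?_
    simp only [Matrix.diag_apply, Matrix.mul_apply, Matrix.transpose_apply]
    exact Finset.sum_nonneg fun l _ => mul_self_nonneg _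
  have htrace : (Ψᵀ * Ψ).trace ≤ L := by
    rw [Matrix.trace]
    have : ∀ k, (Ψᵀ * Ψ).diag k = ∑ l, Ψ l k * Ψ l k := fun k => rfl
    calc ∑ k, (Ψᵀ * Ψ).diag k = ∑ l, ∑ k : Fin K, Ψ l k * Ψ l k := by
          simp only [this]; rw [Finset.sum_comm]
      _ ≤ ∑ _l : Fin L, (1:ℝ) := by
          refine Finset.sum_le_sum fun l _ => ?_
          have := hmaj (δ l) (hδ l)
          simpa [hΨ, sq] using this
      _ = L := by simp
  have hdet2 : det (Ψᵀ * Ψ) ≤ ((L:ℝ) / K) ^ K := by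
    refine (det_le_pow_trace hK hPSD).trans ?_
    have hKpos : (0:ℝ) < K := by exact_mod_cast hK
    exact pow_le_pow_left₀ (div_nonneg htr0 hKpos.le) ((div_le_div_iff_of_pos_right hKpos).mpr htrace) K
  have hZdet : det Z = ∏ i : Fin K, ∏ j ∈ Finset.Ioi i, (μ j - μ i) := by
    rw [hZ, Matrix.det_vandermonde]
  calc (∑ C ∈ Finset.univ.powersetCard K,
        ∏ p ∈ C.offDiag.filter (fun p : Fin L × Fin L => p.1 < p.2),
          (δ p.2 - δ p.1) ^ 2) = (det Z) ^ 2 * det (Ψᵀ * Ψ) := by rw [hLHS, hG]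
    _ ≤ (det Z) ^ 2 * (((L:ℝ) / K) ^ K) := by
        exact mul_le_mul_of_nonneg_left hdet2 (sq_nonneg _)
    _ = _ := by rw [hZdet]
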